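/- Let R be a finite index set and let (Y_r)_{r∈R} be mutually independent real-valued random variables on a common probability space such that 0 ≤ Y_r ≤ b almost surely for every r ∈ R, where b > 0 is a constant, and suppose E[∑_{r∈R} Y_r] ≥ b. Then P( ∑_{r∈R} Y_r ≤ (1/3)·E[∑_{r∈R} Y_r] ) ≤ exp(−2/9). -/

import Mathlib

open MeasureTheory ProbabilityTheory

private lemma exp_neg_le_line {x : ℝ} (h0 : 0 ≤ x) (h1 : x ≤ 1) :
    Real.exp (-x) ≤ 1 - x * (1 - Real.exp (-1)) := by
  have := convexOn_exp.2 (Set.mem_univ (0:ℝ)) (Set.mem_univ (-1))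
    (by linarith : (0:ℝ) ≤ 1 - x) h0 (by ring)
  simp only [smul_eq_mul, mul_zero, mul_neg_one, zero_add, Real.exp_zero, mul_one] at this
  nlinarith [this]


/-- Chernoff-type profit guarantee: if the independent profits `Y r` are
bounded in `[0, b]` and the expected total profit is at least `b`, then the
probability of achieving at most a third of the expected profit is at most
`exp (-2/9)`. -/
theorem profit_bound {Ω : Type*} [MeasurableSpace Ω] (μ : Measure Ω) [IsProbabilityMeasure μ]
    {R : Type*} [Fintype R] (Y : R → Ω → ℝ) (b : ℝ)
    (hmeas : ∀ r, Measurable (Y r))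
    (hindep : iIndepFun Y μ)
    (hb : 0 < b)
    (hbdd : ∀ r, ∀ᵐ ω ∂μ, 0 ≤ Y r ω ∧ Y r ω ≤ b)
    (hE : b ≤ ∫ ω, ∑ r, Y r ω ∂μ) :
    μ {ω | ∑ r, Y r ω ≤ (1 / 3) * ∫ ω', ∑ r, Y r ω' ∂μ}
      ≤ ENNReal.ofReal (Real.exp (-2 / 9)) := by
  classical
  set t : ℝ := -1 / b with ht_def
  have ht_neg : t ≤ 0 := by
    apply div_nonpos_of_nonpos_of_nonneg <;> linarith
  set S : Ω → ℝ := ∑ r, Y r with hS_def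
  have hS_apply : ∀ ω, S ω = ∑ r, Y r ω := fun ω => by simp [hS_def]
  set m : ℝ := ∫ ω, ∑ r, Y r ω ∂μ with hm_def
  have hm_pos : 0 < m := lt_of_lt_of_le hb hE
  -- integrability of each Y r
  have hint : ∀ r, Integrable (Y r) μ := by
    intro r
    refine Integrable.mono' (integrable_const b) (hmeas r).aestronglyMeasurable ?_
    filter_upwards [hbdd r] with ω ⟨h0, h1⟩
    rw [Real.norm_eq_abs, abs_of_nonneg h0]; exact h1
  -- integrability of exp (t * Y r)
  have hintexp : ∀ r, Integrable (fun ω => Real.exp (t * Y r ω)) μ := by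
    intro r
    refine Integrable.mono' (integrable_const 1) ((hmeas r).const_mul t).exp.aestronglyMeasurable ?_
    filter_upwards [hbdd r] with ω ⟨h0, _⟩
    rw [Real.norm_eq_abs, abs_of_nonneg (Real.exp_pos _).le, ← Real.exp_zero]
    exact Real.exp_le_exp.2 (mul_nonpos_of_nonpos_of_nonneg ht_neg h0)
  set c : ℝ := (Real.exp (-1) - 1) / b with hc_def
  -- mgf bound for each r
  have hmgf_r : ∀ r, mgf (Y r) μ t ≤ Real.exp (c * ∫ ω, Y r ω ∂μ) := by
    intro r
    have h1 : mgf (Y r) μ t ≤ ∫ ω, (1 + c * Y r ω) ∂μ := by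
      refine integral_mono_ae (hintexp r) ((integrable_const 1).add ((hint r).const_mul c)) ?_
      filter_upwards [hbdd r] with ω ⟨h0, hb'⟩
      have hx0 : 0 ≤ Y r ω / b := div_nonneg h0 hb.le
      have hx1 : Y r ω / b ≤ 1 := (div_le_one hb).2 hb'
      have key := exp_neg_le_line hx0 hx1
      have e1 : t * Y r ω = -(Y r ω / b) := by rw [ht_def]; ring
      have e2 : c * Y r ω = (Y r ω / b) * (Real.exp (-1) - 1) := by
        rw [hc_def]; ring
      rw [e1, e2]
      nlinarith [key]
    have h2 : ∫ ω, (1 + c * Y r ω) ∂μ = 1 + c * ∫ ω, Y r ω ∂μ := by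
      rw [integral_add (integrable_const 1) ((hint r).const_mul c),
        integral_const, integral_const_mul]
      simp
    calc mgf (Y r) μ t ≤ 1 + c * ∫ ω, Y r ω ∂μ := h1.trans_eq h2
      _ ≤ Real.exp (c * ∫ ω, Y r ω ∂μ) := by
          linarith [Real.add_one_le_exp (c * ∫ ω, Y r ω ∂μ)]
  -- mgf of the sum
  have hmgfS : mgf S μ t ≤ Real.exp (c * m) := by
    have := hindep.mgf_sum (t := t) hmeas Finset.univ
    rw [hS_def, this]
    have hm_split : m = ∑ r, ∫ ω, Y r ω ∂μ := by
      rw [hm_def, integral_finset_sum _ fun r _ => hint r]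
    calc ∏ r, mgf (Y r) μ t ≤ ∏ r, Real.exp (c * ∫ ω, Y r ω ∂μ) :=
          Finset.prod_le_prod (fun r _ => mgf_nonneg) (fun r _ => hmgf_r r)
      _ = Real.exp (∑ r, c * ∫ ω, Y r ω ∂μ) := by rw [Real.exp_sum]
      _ = Real.exp (c * m) := by rw [hm_split, Finset.mul_sum]
  -- integrability of exp (t * S)
  have hintS : Integrable (fun ω => Real.exp (t * S ω)) μ := by
    have : (fun ω => Real.exp (t * S ω)) = fun ω => ∏ r, Real.exp (t * Y r ω) := by
      funext ω
      rw [hS_apply, Finset.mul_sum, Real.exp_sum]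
    -- instead: bound by constant 1
    refine Integrable.mono' (integrable_const 1)
      (((Finset.measurable_sum Finset.univ fun r _ => hmeas r).const_mul t).exp.aestronglyMeasurable.congr ?_) ?_
    · filter_upwards with ω
      rw [hS_apply]
    · have hall : ∀ᵐ ω ∂μ, ∀ r, 0 ≤ Y r ω ∧ Y r ω ≤ b := ae_all_iff.2 hbdd
      filter_upwards [hall] with ω hω
      rw [Real.norm_eq_abs, abs_of_nonneg (Real.exp_pos _).le, ← Real.exp_zero]
      refine Real.exp_le_exp.2 (mul_nonpos_of_nonpos_of_nonneg ht_neg ?_)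
      rw [hS_apply]
      exact Finset.sum_nonneg fun r _ => (hω r).1
  -- Chernoff
  have hchern := measure_le_le_exp_mul_mgf (X := S) (μ := μ) ((1/3) * m) ht_neg hintS
  have hset : {ω | ∑ r, Y r ω ≤ (1 / 3) * ∫ ω', ∑ r, Y r ω' ∂μ}
      = {ω | S ω ≤ (1/3) * m} := by
    ext ω; simp [hS_apply, hm_def]
  rw [hset]
  have hfin : μ {ω | S ω ≤ (1/3) * m} ≠ ⊤ := measure_ne_top _ _
  rw [← ENNReal.ofReal_toReal hfin]
  refine ENNReal.ofReal_le_ofReal (hchern.trans ?_)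
  have hstep : Real.exp (-t * ((1/3) * m)) * mgf S μ t
      ≤ Real.exp (-t * ((1/3) * m)) * Real.exp (c * m) :=
    mul_le_mul_of_nonneg_left hmgfS (Real.exp_pos _).le
  refine hstep.trans ?_
  rw [← Real.exp_add]
  refine Real.exp_le_exp.2 ?_
  have harg : -t * ((1/3) * m) + c * m = (m / b) * (Real.exp (-1) - 2/3) := by
    rw [ht_def, hc_def]; ring
  rw [harg]
  have hmb : 1 ≤ m / b := (one_le_div hb).2 hE
  have he : Real.exp (-1) - 2/3 ≤ -2/9 := by
    have h9 : (9:ℝ)/4 ≤ Real.exp 1 := by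
      nlinarith [Real.exp_one_gt_d9]
    have : Real.exp (-1) ≤ 4/9 := by
      rw [Real.exp_neg]
      rw [inv_le_comm₀ (Real.exp_pos 1) (by norm_num)] at *
      linarith [h9]
    linarith
  nlinarith [hmb, he]
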